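/- Let H : ℂ → ℂ be given by H(h) = −(1/27)·(h−4)³/h². For every c ∈ ℂ with c ≠ 0 and c ≠ 1, the set {z ∈ ℂ : z ≠ 0 and H(z) = c} has exactly 3 elements. -/

import Mathlib

/-- The hessian dynamical system in the coordinate `h = j/(2⁶·3³)`. -/
noncomputable def Hdyn (h : ℂ) : ℂ := -(1 / 27) * (h - 4) ^ 3 / h ^ 2

theorem generic_fiber_has_three_points (c : ℂ) (hc0 : c ≠ 0) (hc1 : c ≠ 1) :
    {z : ℂ | z ≠ 0 ∧ Hdyn z = c}.ncard = 3 := by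
  classical
  set P : Cubic ℂ := ⟨1, 27 * c - 12, 48, -64⟩ with hP
  have ha : P.a ≠ 0 := one_ne_zero
  have hmap : Cubic.map (RingHom.id ℂ) P = P := by
    simp [Cubic.map, hP]
  have h0 : P.toPoly ≠ 0 := Cubic.ne_zero_of_a_ne_zero ha
  have hsplits : (P.toPoly.map (RingHom.id ℂ)).Splits :=
    IsAlgClosed.splits _
  obtain ⟨x, y, z, h3⟩ := (Cubic.splits_iff_roots_eq_three ha).mp hsplits
  have hdisc : P.discr ≠ 0 := by
    have : P.discr = 5038848 * c ^ 2 * (c - 1) := by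
      simp only [Cubic.discr, hP]
      ring
    rw [this]
    exact mul_ne_zero (mul_ne_zero (by norm_num) (pow_ne_zero 2 hc0))
      (sub_ne_zero.mpr hc1)
  have hcard : (Cubic.map (RingHom.id ℂ) P).roots.toFinset.card = 3 :=
    Cubic.card_roots_of_discr_ne_zero ha hsplits hdisc
  rw [hmap] at hcard
  have hset : {z : ℂ | z ≠ 0 ∧ Hdyn z = c} = ↑P.roots.toFinset := by
    ext w
    simp only [Set.mem_setOf_eq, Finset.coe_sort_coe, Finset.mem_coe,
      Multiset.mem_toFinset, Cubic.mem_roots_iff h0]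
    simp only [hP]
    constructor
    · rintro ⟨hw, hH⟩
      unfold Hdyn at hH
      field_simp at hH
      linear_combination -hH
    · intro heq
      have hw : w ≠ 0 := by
        rintro rfl
        simp at heq
      refine ⟨hw, ?_⟩
      unfold Hdyn
      field_simp
      linear_combination -heq
  rw [hset, Set.ncard_coe_finset, hcard]
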